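/- Let A = K[x,y,z]/⟨x^5, y^5, z^5, x^2yz, xy^2z⟩ over a field K of characteristic 0. Then the Hilbert function of A is (1, 3, 6, 10, 13, 13, 10, 6, 3), and for every linear form ℓ the multiplication map A_4 → A_5 is not bijective; hence A fails the Weak Lefschetz Property. -/

import Mathlib

open MvPolynomial

/-- The degree-`m` piece of the graded quotient. -/
noncomputable def gradedPiece {K : Type*} [Field K] {σ : Type*}
    (I : Ideal (MvPolynomial σ K)) (m : ℕ) :
    Submodule K (MvPolynomial σ K ⧸ I) :=
  (MvPolynomial.homogeneousSubmodule σ K m).map (Ideal.Quotient.mkₐ K I).toLinearMap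

set_option synthInstance.maxHeartbeats 80000

namespace Stmt13Aux

noncomputable def e (p : ℕ × ℕ × ℕ) : Fin 3 →₀ ℕ :=
  Finsupp.single 0 p.1 + Finsupp.single 1 p.2.1 + Finsupp.single 2 p.2.2

lemma e_apply0 (p : ℕ × ℕ × ℕ) : e p 0 = p.1 := by simp [e, Finsupp.single_apply]
lemma e_apply1 (p : ℕ × ℕ × ℕ) : e p 1 = p.2.1 := by simp [e, Finsupp.single_apply]
lemma e_apply2 (p : ℕ × ℕ × ℕ) : e p 2 = p.2.2 := by simp [e, Finsupp.single_apply]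

lemma eq_e (d : Fin 3 →₀ ℕ) : d = e (d 0, d 1, d 2) := by
  ext i
  fin_cases i
  · simp [e_apply0]
  · simp [e_apply1]
  · simp [e_apply2]

lemma e_eq_iff {p q : ℕ × ℕ × ℕ} : e p = e q ↔ p = q := by
  constructor
  · intro h
    have h0 := congrArg (fun d : Fin 3 →₀ ℕ => d 0) h
    have h1 := congrArg (fun d : Fin 3 →₀ ℕ => d 1) h
    have h2 := congrArg (fun d : Fin 3 →₀ ℕ => d 2) h
    simp only [e_apply0, e_apply1, e_apply2] at h0 h1 h2
    exact Prod.ext h0 (Prod.ext h1 h2)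
  · rintro rfl; rfl

lemma degree_fin3 (d : Fin 3 →₀ ℕ) : d.degree = d 0 + d 1 + d 2 := by
  rw [Finsupp.degree_apply, Finset.sum_subset (Finset.subset_univ _)
    (fun i _ hi => by simpa using (Finsupp.notMem_support_iff.mp hi)),
    Fin.sum_univ_three]

lemma degree_e (p : ℕ × ℕ × ℕ) : (e p).degree = p.1 + p.2.1 + p.2.2 := by
  rw [degree_fin3, e_apply0, e_apply1, e_apply2]

lemma e_le_iff {p : ℕ × ℕ × ℕ} {d : Fin 3 →₀ ℕ} :
    e p ≤ d ↔ p.1 ≤ d 0 ∧ p.2.1 ≤ d 1 ∧ p.2.2 ≤ d 2 := by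
  rw [Finsupp.le_def]
  constructor
  · intro h
    exact ⟨by simpa [e_apply0] using h 0, by simpa [e_apply1] using h 1,
      by simpa [e_apply2] using h 2⟩
  · rintro ⟨h0, h1, h2⟩ i
    fin_cases i
    · simpa [e_apply0] using h0
    · simpa [e_apply1] using h1
    · simpa [e_apply2] using h2

/-- The generator exponents. -/
def G : Set (Fin 3 →₀ ℕ) := {e (5,0,0), e (0,5,0), e (0,0,5), e (2,1,1), e (1,2,1)}

/-- standard monomial exponents in degree `m`. -/
def T (m : ℕ) : Finset (ℕ × ℕ × ℕ) :=
  (Finset.range 5 ×ˢ Finset.range 5 ×ˢ Finset.range 5).filter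
    (fun p => p.1 + p.2.1 + p.2.2 = m ∧ ¬(2 ≤ p.1 ∧ 1 ≤ p.2.1 ∧ 1 ≤ p.2.2) ∧
      ¬(1 ≤ p.1 ∧ 2 ≤ p.2.1 ∧ 1 ≤ p.2.2))

lemma mem_T {m : ℕ} {p : ℕ × ℕ × ℕ} :
    p ∈ T m ↔ p.1 < 5 ∧ p.2.1 < 5 ∧ p.2.2 < 5 ∧ p.1 + p.2.1 + p.2.2 = m ∧
      ¬(2 ≤ p.1 ∧ 1 ≤ p.2.1 ∧ 1 ≤ p.2.2) ∧ ¬(1 ≤ p.1 ∧ 2 ≤ p.2.1 ∧ 1 ≤ p.2.2) := by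
  simp only [T, Finset.mem_filter, Finset.mem_product, Finset.mem_range]
  tauto

lemma no_gen_le {m : ℕ} {p : ℕ × ℕ × ℕ} (hp : p ∈ T m) :
    ∀ g ∈ G, ¬ g ≤ e p := by
  rw [mem_T] at hp
  intro g hg hle
  simp only [G, Set.mem_insert_iff, Set.mem_singleton_iff] at hg
  rcases hg with rfl | rfl | rfl | rfl | rfl <;>
    · simp only [e_le_iff, e_apply0, e_apply1, e_apply2] at hle
      norm_num at hle
      omega

lemma not_mem_I_of_T {K : Type*} [Field K] {m : ℕ} {p : ℕ × ℕ × ℕ} (hp : p ∈ T m) :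
    monomial (e p) (1 : K) ∉ Ideal.span ((fun s => monomial s (1 : K)) '' G) := by
  intro h
  rw [mem_ideal_span_monomial_image] at h
  obtain ⟨g, hg, hle⟩ := h (e p) (by simp [support_monomial])
  exact no_gen_le hp g hg hle


variable {K : Type*} [Field K]

lemma X_prod (i j k : ℕ) :
    (X 0 : MvPolynomial (Fin 3) K) ^ i * X 1 ^ j * X 2 ^ k = monomial (e (i, j, k)) 1 := by
  simp [e, X_pow_eq_monomial, monomial_mul]

lemma hI_monomial (I : Ideal (MvPolynomial (Fin 3) K))
    (hI : I = Ideal.span {X 0 ^ 5, X 1 ^ 5, X 2 ^ 5,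
      X 0 ^ 2 * X 1 * X 2, X 0 * X 1 ^ 2 * X 2}) :
    I = Ideal.span ((fun s => monomial s (1 : K)) '' G) := by
  have h1 : (X 0 : MvPolynomial (Fin 3) K) ^ 5 = monomial (e (5,0,0)) 1 := by
    rw [← X_prod]; ring
  have h2 : (X 1 : MvPolynomial (Fin 3) K) ^ 5 = monomial (e (0,5,0)) 1 := by
    rw [← X_prod]; ring
  have h3 : (X 2 : MvPolynomial (Fin 3) K) ^ 5 = monomial (e (0,0,5)) 1 := by
    rw [← X_prod]; ring
  have h4 : (X 0 : MvPolynomial (Fin 3) K) ^ 2 * X 1 * X 2 = monomial (e (2,1,1)) 1 := by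
    rw [← X_prod]; ring
  have h5 : (X 0 : MvPolynomial (Fin 3) K) * X 1 ^ 2 * X 2 = monomial (e (1,2,1)) 1 := by
    rw [← X_prod]; ring
  rw [hI, h1, h2, h3, h4, h5]
  congr 1
  simp only [G, Set.image_insert_eq, Set.image_singleton]

lemma ker_mk (I : Ideal (MvPolynomial (Fin 3) K)) (q : MvPolynomial (Fin 3) K) :
    (Ideal.Quotient.mkₐ K I).toLinearMap q = 0 ↔ q ∈ I := by
  simp [Ideal.Quotient.mkₐ_eq_mk, Ideal.Quotient.eq_zero_iff_mem]

theorem finrank_gradedPiece (I : Ideal (MvPolynomial (Fin 3) K))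
    (hI : I = Ideal.span {X 0 ^ 5, X 1 ^ 5, X 2 ^ 5,
      X 0 ^ 2 * X 1 * X 2, X 0 * X 1 ^ 2 * X 2}) (m : ℕ) :
    Module.finrank K (gradedPiece I m) = (T m).card := by
  classical
  have hI' := hI_monomial I hI
  set f : MvPolynomial (Fin 3) K →ₗ[K] (MvPolynomial (Fin 3) K ⧸ I) :=
    (Ideal.Quotient.mkₐ K I).toLinearMap with hf
  let u : T m → MvPolynomial (Fin 3) K := fun p => monomial (e p.1) 1
  have hu : LinearIndependent K u := by
    have : u = (fun s => monomial s (1 : K)) ∘ (fun p : T m => e p.1) := rfl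
    rw [this, ← coe_basisMonomials]
    exact (basisMonomials (Fin 3) K).linearIndependent.comp _
      (fun p q h => Subtype.ext (e_eq_iff.mp h))
  have hsupp : ∀ q ∈ Submodule.span K (Set.range u),
      ∀ d ∈ q.support, ∃ p : T m, d = e p.1 := by
    intro q hq
    induction hq using Submodule.span_induction with
    | mem x hx =>
      obtain ⟨p, rfl⟩ := hx
      intro d hd
      rw [support_monomial] at hd
      simp only [if_neg (one_ne_zero (α := K)), Finset.mem_singleton] at hd
      exact ⟨p, hd⟩
    | zero => simp
    | add x y hx hy ihx ihy =>
      intro d hd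
      rcases Finset.mem_union.mp (MvPolynomial.support_add hd) with h | h
      · exact ihx d h
      · exact ihy d h
    | smul a x hx ihx =>
      intro d hd
      exact ihx d (MvPolynomial.support_smul hd)
  have hdisj : Disjoint (Submodule.span K (Set.range u)) (LinearMap.ker f) := by
    rw [Submodule.disjoint_def]
    intro q hq hq'
    have hqI : q ∈ I := (ker_mk I q).mp (LinearMap.mem_ker.mp hq')
    rw [hI', mem_ideal_span_monomial_image] at hqI
    by_contra hne
    obtain ⟨d, hd⟩ := (MvPolynomial.support_nonempty.mpr hne)
    obtain ⟨g, hg, hle⟩ := hqI d hd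
    obtain ⟨p, rfl⟩ := hsupp q hq d hd
    exact no_gen_le p.2 g hg hle
  have hind : LinearIndependent K (f ∘ u) := hu.map hdisj
  have hspan : gradedPiece I m = Submodule.span K (Set.range (f ∘ u)) := by
    apply le_antisymm
    · rintro x hx
      obtain ⟨q, hq, rfl⟩ := Submodule.mem_map.mp hx
      have hq' : q.IsHomogeneous m := hq
      have h1 : f q = ∑ d ∈ q.support, coeff d q • f (monomial d 1) := by
        conv_lhs => rw [← support_sum_monomial_coeff q]
        rw [map_sum]
        refine Finset.sum_congr rfl fun d _ => ?_
        rw [← map_smul]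
        congr 1
        rw [MvPolynomial.smul_monomial, smul_eq_mul, mul_one]
      rw [h1]
      apply Submodule.sum_mem
      intro d hd
      by_cases hdiv : ∃ g ∈ G, g ≤ d
      · have hmem : monomial d (1 : K) ∈ I := by
          rw [hI', mem_ideal_span_monomial_image]
          intro xi hxi
          rw [support_monomial, if_neg (one_ne_zero (α := K)),
            Finset.mem_singleton] at hxi
          subst hxi; exact hdiv
        have : f (monomial d 1) = 0 := (ker_mk I _).mpr hmem
        rw [this, smul_zero]
        exact Submodule.zero_mem _
      · push_neg at hdiv
        have hdeg : d.degree = m := by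
          rw [Finsupp.degree_eq_weight_one]
          exact hq' (mem_support_iff.mp hd)
        have hp : (d 0, d 1, d 2) ∈ T m := by
          rw [mem_T]
          have h5a : ¬ 5 ≤ d 0 := fun h =>
            hdiv (e (5,0,0)) (by simp [G]) (e_le_iff.mpr (by simp; omega))
          have h5b : ¬ 5 ≤ d 1 := fun h =>
            hdiv (e (0,5,0)) (by simp [G]) (e_le_iff.mpr (by simp; omega))
          have h5c : ¬ 5 ≤ d 2 := fun h =>
            hdiv (e (0,0,5)) (by simp [G]) (e_le_iff.mpr (by simp; omega))
          have hA : ¬ (2 ≤ d 0 ∧ 1 ≤ d 1 ∧ 1 ≤ d 2) := fun h =>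
            hdiv (e (2,1,1)) (by simp [G]) (e_le_iff.mpr (by simp; omega))
          have hB : ¬ (1 ≤ d 0 ∧ 2 ≤ d 1 ∧ 1 ≤ d 2) := fun h =>
            hdiv (e (1,2,1)) (by simp [G]) (e_le_iff.mpr (by simp; omega))
          have hsum : d 0 + d 1 + d 2 = m := by rw [← degree_fin3]; exact hdeg
          simp only []
          omega
        apply Submodule.smul_mem
        apply Submodule.subset_span
        refine ⟨⟨(d 0, d 1, d 2), hp⟩, ?_⟩
        show f (monomial (e (d 0, d 1, d 2)) 1) = f (monomial d 1)
        rw [← eq_e d]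
    · rw [Submodule.span_le]
      rintro x ⟨p, rfl⟩
      exact Submodule.mem_map.mpr ⟨monomial (e p.1) 1,
        isHomogeneous_monomial _ (by rw [degree_e]; exact (mem_T.mp p.2).2.2.2.1), rfl⟩
  rw [hspan, finrank_span_eq_card hind, Fintype.card_coe]


/-! ### Part 2: failure of WLP -/

lemma decomp (ℓ : MvPolynomial (Fin 3) K) (hℓ : ℓ.IsHomogeneous 1) :
    ℓ = C (coeff (e (1,0,0)) ℓ) * X 0 + C (coeff (e (0,1,0)) ℓ) * X 1
      + C (coeff (e (0,0,1)) ℓ) * X 2 := by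
  have hs0 : e (1,0,0) = Finsupp.single 0 1 := by simp [e]
  have hs1 : e (0,1,0) = Finsupp.single 1 1 := by simp [e]
  have hs2 : e (0,0,1) = Finsupp.single 2 1 := by simp [e]
  have hne : ∀ i j : Fin 3, i ≠ j → Finsupp.single i (1:ℕ) ≠ Finsupp.single j 1 := by
    intro i j hij h
    have h' := congrArg (fun f : Fin 3 →₀ ℕ => f i) h
    simp only [Finsupp.single_eq_same, Finsupp.single_eq_of_ne hij] at h'
    exact one_ne_zero h'
  apply MvPolynomial.ext
  intro d
  rw [coeff_add, coeff_add, coeff_C_mul, coeff_C_mul, coeff_C_mul,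
    coeff_X', coeff_X', coeff_X']
  by_cases h0 : Finsupp.single (0 : Fin 3) 1 = d
  · rw [if_pos h0, if_neg (h0 ▸ hne 1 0 (by decide)), if_neg (h0 ▸ hne 2 0 (by decide)),
      ← h0, hs0]
    ring
  by_cases h1 : Finsupp.single (1 : Fin 3) 1 = d
  · rw [if_pos h1, if_neg h0, if_neg (h1 ▸ hne 2 1 (by decide)), ← h1, hs1]
    ring
  by_cases h2 : Finsupp.single (2 : Fin 3) 1 = d
  · rw [if_pos h2, if_neg h0, if_neg h1, ← h2, hs2]; ring
  rw [if_neg h0, if_neg h1, if_neg h2]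
  have hd : coeff d ℓ = 0 := by
    apply hℓ.coeff_eq_zero
    intro hdeg
    rw [degree_fin3] at hdeg
    have hcase : (d 0 = 1 ∧ d 1 = 0 ∧ d 2 = 0) ∨ (d 0 = 0 ∧ d 1 = 1 ∧ d 2 = 0) ∨
        (d 0 = 0 ∧ d 1 = 0 ∧ d 2 = 1) := by omega
    rcases hcase with ⟨ha, hb, hc⟩ | ⟨ha, hb, hc⟩ | ⟨ha, hb, hc⟩
    · refine h0 (Eq.symm ?_)
      rw [eq_e d, ha, hb, hc]; exact hs0
    · refine h1 (Eq.symm ?_)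
      rw [eq_e d, ha, hb, hc]; exact hs1
    · refine h2 (Eq.symm ?_)
      rw [eq_e d, ha, hb, hc]; exact hs2
  rw [hd]; ring

/-- The kernel element of multiplication by `a x + b y + c z` in degree 4. -/
noncomputable def Fm (a b c : K) : MvPolynomial (Fin 3) K :=
  monomial (e (4,0,0)) (a^4) + monomial (e (3,1,0)) (-(a^3*b)) + monomial (e (3,0,1)) (-(a^3*c))
  + monomial (e (2,2,0)) (a^2*b^2) + monomial (e (2,0,2)) (a^2*c^2)
  + monomial (e (1,3,0)) (-(a*b^3)) + monomial (e (1,1,2)) (2*(a*b*c^2))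
  + monomial (e (1,0,3)) (-(a*c^3)) + monomial (e (0,4,0)) (b^4)
  + monomial (e (0,3,1)) (-(b^3*c)) + monomial (e (0,2,2)) (b^2*c^2)
  + monomial (e (0,1,3)) (-(b*c^3)) + monomial (e (0,0,4)) (c^4)

lemma Fm_homog (a b c : K) : (Fm a b c).IsHomogeneous 4 := by
  unfold Fm
  repeat' first
    | exact isHomogeneous_monomial _ (by simp [degree_e])
    | apply IsHomogeneous.add

lemma coeff_Fm_400 (a b c : K) : coeff (e (4,0,0)) (Fm a b c) = a ^ 4 := by
  simp [Fm, coeff_monomial, e_eq_iff]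

lemma coeff_Fm_040 (a b c : K) : coeff (e (0,4,0)) (Fm a b c) = b ^ 4 := by
  simp [Fm, coeff_monomial, e_eq_iff]

lemma coeff_Fm_004 (a b c : K) : coeff (e (0,0,4)) (Fm a b c) = c ^ 4 := by
  simp [Fm, coeff_monomial, e_eq_iff]

lemma mono_C (i j k : ℕ) (r : K) :
    monomial (e (i,j,k)) r = C r * (X 0 ^ i * X 1 ^ j * X 2 ^ k) := by
  rw [X_prod, C_mul_monomial, mul_one]

lemma key (a b c : K) :
    (C a * X 0 + C b * X 1 + C c * X 2) * Fm a b c =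
      C (a^5) * (X 0 ^ 5) + C (b^5) * (X 1 ^ 5) + C (c^5) * (X 2 ^ 5)
      + (C (3*(a^2*(b*c^2))) * X 2 - C (2*(a^3*(b*c))) * X 0) * (X 0 ^ 2 * X 1 * X 2)
      + (C (a^2*(b^2*c)) * X 0 - C (2*(a*(b^3*c))) * X 1 + C (3*(a*(b^2*c^2))) * X 2)
          * (X 0 * X 1 ^ 2 * X 2) := by
  simp only [Fm, mono_C, map_mul, map_pow, map_neg, map_ofNat]
  ring

theorem no_wlp (I : Ideal (MvPolynomial (Fin 3) K))
    (hI : I = Ideal.span {X 0 ^ 5, X 1 ^ 5, X 2 ^ 5,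
      X 0 ^ 2 * X 1 * X 2, X 0 * X 1 ^ 2 * X 2}) :
    ∀ ℓ : MvPolynomial (Fin 3) K, ℓ.IsHomogeneous 1 →
      ¬ ((∀ x ∈ gradedPiece I 4, Ideal.Quotient.mk I ℓ * x = 0 → x = 0) ∧
         (∀ y ∈ gradedPiece I 5,
           ∃ x ∈ gradedPiece I 4, Ideal.Quotient.mk I ℓ * x = y)) := by
  rintro ℓ hℓ ⟨hinj, -⟩
  have hI' := hI_monomial I hI
  set a := coeff (e (1,0,0)) ℓ with ha_def
  set b := coeff (e (0,1,0)) ℓ with hb_def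
  set c := coeff (e (0,0,1)) ℓ with hc_def
  have hdec : ℓ = C a * X 0 + C b * X 1 + C c * X 2 := decomp ℓ hℓ
  by_cases htriv : a = 0 ∧ b = 0 ∧ c = 0
  · obtain ⟨ha, hb, hc⟩ := htriv
    have hℓ0 : ℓ = 0 := by rw [hdec, ha, hb, hc]; simp
    have hx4 : Ideal.Quotient.mk I (monomial (e (4,0,0)) (1:K)) ∈ gradedPiece I 4 :=
      Submodule.mem_map.mpr ⟨monomial (e (4,0,0)) (1:K),
        isHomogeneous_monomial _ (by simp [degree_e]),
        by simp [Ideal.Quotient.mkₐ_eq_mk]⟩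
    have hz := hinj _ hx4 (by rw [hℓ0]; simp)
    rw [Ideal.Quotient.eq_zero_iff_mem, hI'] at hz
    exact not_mem_I_of_T (show ((4,0,0) : ℕ × ℕ × ℕ) ∈ T 4 by decide) hz
  · have hmem : Ideal.Quotient.mk I (Fm a b c) ∈ gradedPiece I 4 :=
      Submodule.mem_map.mpr ⟨Fm a b c, Fm_homog a b c,
        by simp [Ideal.Quotient.mkₐ_eq_mk]⟩
    have hprod : ℓ * Fm a b c ∈ I := by
      rw [hdec, key, hI]
      refine add_mem (add_mem (add_mem (add_mem ?_ ?_) ?_) ?_) ?_ <;>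
        exact Ideal.mul_mem_left _ _ (Ideal.subset_span (by simp))
    have h0 : Ideal.Quotient.mk I ℓ * Ideal.Quotient.mk I (Fm a b c) = 0 := by
      rw [← map_mul, Ideal.Quotient.eq_zero_iff_mem]
      exact hprod
    have hFI := hinj _ hmem h0
    rw [Ideal.Quotient.eq_zero_iff_mem, hI', mem_ideal_span_monomial_image] at hFI
    have hex : ∃ p ∈ T 4, coeff (e p) (Fm a b c) ≠ 0 := by
      by_cases ha : a ≠ 0
      · exact ⟨(4,0,0), by decide, by rw [coeff_Fm_400]; exact pow_ne_zero _ ha⟩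
      by_cases hb : b ≠ 0
      · exact ⟨(0,4,0), by decide, by rw [coeff_Fm_040]; exact pow_ne_zero _ hb⟩
      have hc : c ≠ 0 := by push_neg at ha hb; tauto
      exact ⟨(0,0,4), by decide, by rw [coeff_Fm_004]; exact pow_ne_zero _ hc⟩
    obtain ⟨p, hpT, hpc⟩ := hex
    obtain ⟨g, hg, hle⟩ := hFI (e p) (mem_support_iff.mpr hpc)
    exact no_gen_le hpT g hg hle

end Stmt13Aux

open Stmt13Aux in
/-- Example 2.5: `A = K[x,y,z]/⟨x⁵,y⁵,z⁵,x²yz,xy²z⟩` has Hilbert function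
`(1,3,6,10,13,13,10,6,3)`, and for every linear form `ℓ` the multiplication map
`A₄ → A₅` is not bijective; hence `A` fails the Weak Lefschetz Property. -/
theorem stmt13 {K : Type*} [Field K] [CharZero K]
    (I : Ideal (MvPolynomial (Fin 3) K))
    (hI : I = Ideal.span {X 0 ^ 5, X 1 ^ 5, X 2 ^ 5,
      X 0 ^ 2 * X 1 * X 2, X 0 * X 1 ^ 2 * X 2}) :
    (Module.finrank K (gradedPiece I 0) = 1 ∧
     Module.finrank K (gradedPiece I 1) = 3 ∧
     Module.finrank K (gradedPiece I 2) = 6 ∧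
     Module.finrank K (gradedPiece I 3) = 10 ∧
     Module.finrank K (gradedPiece I 4) = 13 ∧
     Module.finrank K (gradedPiece I 5) = 13 ∧
     Module.finrank K (gradedPiece I 6) = 10 ∧
     Module.finrank K (gradedPiece I 7) = 6 ∧
     Module.finrank K (gradedPiece I 8) = 3 ∧
     ∀ m : ℕ, 9 ≤ m → Module.finrank K (gradedPiece I m) = 0) ∧
    ∀ ℓ : MvPolynomial (Fin 3) K, ℓ.IsHomogeneous 1 →
      ¬ ((∀ x ∈ gradedPiece I 4, Ideal.Quotient.mk I ℓ * x = 0 → x = 0) ∧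
         (∀ y ∈ gradedPiece I 5,
           ∃ x ∈ gradedPiece I 4, Ideal.Quotient.mk I ℓ * x = y)) := by
  have h := finrank_gradedPiece I hI
  refine ⟨⟨by rw [h 0]; decide, by rw [h 1]; decide, by rw [h 2]; decide,
    by rw [h 3]; decide, by rw [h 4]; decide, by rw [h 5]; decide,
    by rw [h 6]; decide, by rw [h 7]; decide, by rw [h 8]; decide, ?_⟩,
    no_wlp I hI⟩
  intro m hm
  rw [h m]
  rw [Finset.card_eq_zero, Finset.eq_empty_iff_forall_notMem]
  intro p hp
  rw [mem_T] at hp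
  omega
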